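/- Let (T, 𝒯, λ) be an atomless probability space, Y a countable complete metric space, and f, g : T → Y two measurable functions. Then for every t ∈ [0,1] there exists a measurable function h : T → Y with h(s) ∈ {f(s), g(s)} for all s ∈ T and λ ∘ h⁻¹ = t (λ ∘ f⁻¹) + (1−t)(λ ∘ g⁻¹). (This is the key step establishing convexity of the set of distributions of selections.) -/

import Mathlib

open MeasureTheory
open scoped NNReal ENNReal

/-- The probability space `(T, 𝒯, lam)` is atomless. -/
def AtomlessMeasure {T : Type*} [MeasurableSpace T] (lam : Measure T) : Prop :=
  ∀ s : Set T, MeasurableSet s → 0 < lam s →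
    ∃ u, u ⊆ s ∧ MeasurableSet u ∧ 0 < lam u ∧ lam u < lam s

section Aux

variable {T : Type*} [MeasurableSpace T] (lam : Measure T) [IsProbabilityMeasure lam]

lemma atomless_halve (hat : AtomlessMeasure lam) {s : Set T} (hs : MeasurableSet s)
    (h0 : 0 < lam s) :
    ∃ u, u ⊆ s ∧ MeasurableSet u ∧ 0 < lam u ∧ 2 * lam u ≤ lam s := by
  obtain ⟨v, hvs, hvm, hv0, hvlt⟩ := hat s hs h0
  have hd : lam (s \ v) = lam s - lam v :=
    measure_diff hvs hvm.nullMeasurableSet (measure_ne_top lam v)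
  have hsum : lam v + lam (s \ v) = lam s := by
    rw [hd, add_tsub_cancel_of_le hvlt.le]
  have hdpos : 0 < lam (s \ v) := by
    rw [hd]; exact tsub_pos_of_lt hvlt
  rcases le_total (lam v) (lam (s \ v)) with h | h
  · refine ⟨v, hvs, hvm, hv0, ?_⟩
    calc 2 * lam v = lam v + lam v := two_mul _
    _ ≤ lam v + lam (s \ v) := by gcongr
    _ = lam s := hsum
  · refine ⟨s \ v, Set.diff_subset, hs.diff hvm, hdpos, ?_⟩
    calc 2 * lam (s \ v) = lam (s \ v) + lam (s \ v) := two_mul _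
    _ ≤ lam v + lam (s \ v) := by gcongr
    _ = lam s := hsum

lemma atomless_small (hat : AtomlessMeasure lam) {s : Set T} (hs : MeasurableSet s)
    (h0 : 0 < lam s) {ε : ℝ≥0∞} (hε : 0 < ε) :
    ∃ u, u ⊆ s ∧ MeasurableSet u ∧ 0 < lam u ∧ lam u ≤ ε := by
  have key : ∀ n : ℕ, ∃ u, u ⊆ s ∧ MeasurableSet u ∧ 0 < lam u ∧
      lam u ≤ (2 : ℝ≥0∞)⁻¹ ^ n := by
    intro n
    induction n with
    | zero => exact ⟨s, subset_rfl, hs, h0, by simpa using prob_le_one⟩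
    | succ n ih =>
      obtain ⟨u, hus, hum, hu0, hub⟩ := ih
      obtain ⟨u', hu's, hu'm, hu'0, hu'b⟩ := atomless_halve lam hat hum hu0
      refine ⟨u', hu's.trans hus, hu'm, hu'0, ?_⟩
      have : lam u' = 2⁻¹ * (2 * lam u') := by
        rw [← mul_assoc, ENNReal.inv_mul_cancel two_ne_zero ENNReal.ofNat_ne_top, one_mul]
      rw [this, pow_succ, mul_comm ((2 : ℝ≥0∞)⁻¹ ^ n) 2⁻¹]
      exact mul_le_mul_right (hu'b.trans hub) _
  obtain ⟨n, hn⟩ := ENNReal.exists_inv_two_pow_lt hε.ne'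
  obtain ⟨u, h1, h2, h3, h4⟩ := key n
  exact ⟨u, h1, h2, h3, h4.trans hn.le⟩

/-- Sierpiński: atomless measures take all intermediate values. -/
lemma atomless_exists_measure_eq (hat : AtomlessMeasure lam) {s : Set T}
    (hs : MeasurableSet s) {c : ℝ≥0∞} (hc : c ≤ lam s) :
    ∃ u, u ⊆ s ∧ MeasurableSet u ∧ lam u = c := by
  classical
  have hc1 : c ≤ 1 := hc.trans prob_le_one
  -- the type of admissible partial sets
  set K := {u : Set T // u ⊆ s ∧ MeasurableSet u ∧ lam u ≤ c} with hK
  have hstep : ∀ k : K, ∃ k' : K, k.1 ⊆ k'.1 ∧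
      ∀ w, w ⊆ s \ k.1 → MeasurableSet w → lam k.1 + lam w ≤ c →
        2 * lam k.1 + lam w ≤ 2 * lam k'.1 := by
    rintro ⟨u, hus, hum, huc⟩
    set δ : ℝ≥0∞ := ⨆ (v : Set T) (_ : v ⊆ s \ u ∧ MeasurableSet v ∧ lam u + lam v ≤ c),
      lam v with hδ
    have hub : ∀ w, w ⊆ s \ u → MeasurableSet w → lam u + lam w ≤ c → lam w ≤ δ := by
      intro w h1 h2 h3
      exact le_iSup₂ (f := fun (v : Set T)
        (_ : v ⊆ s \ u ∧ MeasurableSet v ∧ lam u + lam v ≤ c) => lam v) w ⟨h1, h2, h3⟩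
    have hδc : δ ≤ c := by
      refine iSup₂_le fun v hv => ?_
      exact le_trans le_add_self hv.2.2
    rcases eq_zero_or_pos δ with h0 | hpos
    · refine ⟨⟨u, hus, hum, huc⟩, subset_rfl, fun w h1 h2 h3 => ?_⟩
      have : lam w = 0 := le_antisymm (h0 ▸ hub w h1 h2 h3) zero_le
      simp [this]
    · have hδtop : δ ≠ ⊤ := (hδc.trans_lt (hc1.trans_lt ENNReal.one_lt_top)).ne
      have hhalf : δ / 2 < δ := ENNReal.half_lt_self hpos.ne' hδtop
      obtain ⟨v, hv⟩ := lt_iSup_iff.mp hhalf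
      have hvP : v ⊆ s \ u ∧ MeasurableSet v ∧ lam u + lam v ≤ c := by
        by_contra h
        rw [iSup_neg h] at hv
        exact (not_lt.mpr zero_le) hv
      rw [ciSup_pos hvP] at hv
      obtain ⟨hv1, hv2, hv3⟩ := hvP
      have hdisj : Disjoint u v := Set.disjoint_left.mpr fun a ha hav => (hv1 hav).2 ha
      have hmu : lam (u ∪ v) = lam u + lam v := measure_union hdisj hv2
      refine ⟨⟨u ∪ v, Set.union_subset hus (hv1.trans Set.diff_subset), hum.union hv2,
        by rw [hmu]; exact hv3⟩, Set.subset_union_left, fun w h1 h2 h3 => ?_⟩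
      have h2v : δ ≤ 2 * lam v := by
        have : 2 * (δ / 2) ≤ 2 * lam v := mul_le_mul_right hv.le _
        rwa [ENNReal.mul_div_cancel two_ne_zero ENNReal.ofNat_ne_top] at this
      calc 2 * lam u + lam w ≤ 2 * lam u + δ := by gcongr; exact hub w h1 h2 h3
      _ ≤ 2 * lam u + 2 * lam v := by gcongr
      _ = 2 * lam (u ∪ v) := by rw [hmu, mul_add]
  -- iterate
  let F : K → K := fun k => (hstep k).choose
  let u : ℕ → K := fun n => F^[n] ⟨∅, Set.empty_subset s, MeasurableSet.empty, by simp⟩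
  have husucc : ∀ n, u (n + 1) = F (u n) := fun n => Function.iterate_succ_apply' F n _
  have humono : ∀ n, (u n).1 ⊆ (u (n + 1)).1 := fun n => by
    rw [husucc]; exact (hstep (u n)).choose_spec.1
  have hmono : Monotone fun n => (u n).1 :=
    monotone_nat_of_le_succ humono
  set U : Set T := ⋃ n, (u n).1 with hU
  have hUs : U ⊆ s := Set.iUnion_subset fun n => (u n).2.1
  have hUm : MeasurableSet U := MeasurableSet.iUnion fun n => (u n).2.2.1
  have hUlam : lam U = ⨆ n, lam (u n).1 :=
    Directed.measure_iUnion (hmono.directed_le)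
  have hUc : lam U ≤ c := by
    rw [hUlam]; exact iSup_le fun n => (u n).2.2.2
  rcases eq_or_lt_of_le hUc with heq | hlt
  · exact ⟨U, hUs, hUm, heq⟩
  · exfalso
    have hdm : lam (s \ U) = lam s - lam U :=
      measure_diff hUs hUm.nullMeasurableSet (measure_ne_top lam U)
    have hdpos : 0 < lam (s \ U) := by
      rw [hdm]; exact tsub_pos_of_lt (hlt.trans_le hc)
    obtain ⟨w, hw1, hw2, hw3, hw4⟩ := atomless_small lam hat (hs.diff hUm) hdpos
      (tsub_pos_of_lt hlt : 0 < c - lam U)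
    have hwgood : ∀ n, w ⊆ s \ (u n).1 ∧ lam (u n).1 + lam w ≤ c := by
      intro n
      have hsub : (u n).1 ⊆ U := Set.subset_iUnion (fun n => (u n).1) n
      constructor
      · exact hw1.trans (Set.diff_subset_diff_right hsub)
      · calc lam (u n).1 + lam w ≤ lam U + (c - lam U) :=
              add_le_add (measure_mono hsub) hw4
        _ = c := add_tsub_cancel_of_le hlt.le
    have hgrow : ∀ n : ℕ, (n : ℝ≥0∞) * lam w ≤ 2 * lam (u n).1 := by
      intro n
      induction n with
      | zero => simp
      | succ n ih =>
        have hspec := (hstep (u n)).choose_spec.2 w (hwgood n).1 hw2 (hwgood n).2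
        calc ((n + 1 : ℕ) : ℝ≥0∞) * lam w = (n : ℝ≥0∞) * lam w + lam w := by
              push_cast; rw [add_mul, one_mul]
        _ ≤ 2 * lam (u n).1 + lam w := by gcongr
        _ ≤ 2 * lam (u (n + 1)).1 := by rw [husucc n]; exact hspec
    have hw0 : lam w ≠ 0 := hw3.ne'
    have hdt : (2 : ℝ≥0∞) / lam w ≠ ⊤ :=
      (ENNReal.div_lt_top (by norm_num) hw0).ne
    obtain ⟨n, hn⟩ := ENNReal.exists_nat_gt hdt
    have h2lt : (2 : ℝ≥0∞) < n * lam w :=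
      (ENNReal.div_lt_iff (Or.inl hw0) (Or.inl (measure_ne_top lam w))).mp hn
    have : (n : ℝ≥0∞) * lam w ≤ 2 := by
      calc (n : ℝ≥0∞) * lam w ≤ 2 * lam (u n).1 := hgrow n
      _ ≤ 2 * 1 := by gcongr; exact prob_le_one
      _ = 2 := mul_one _
    exact absurd (h2lt.trans_le this) (by norm_num)

end Aux

theorem stmt_16 {T Y : Type*} [MeasurableSpace T]
    [MetricSpace Y] [Countable Y] [CompleteSpace Y] [MeasurableSpace Y] [BorelSpace Y]
    (lam : Measure T) [IsProbabilityMeasure lam] (hatomless : AtomlessMeasure lam)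
    (f g : T → Y) (hf : Measurable f) (hg : Measurable g) :
    ∀ r : ℝ≥0, r ≤ 1 →
      ∃ h : T → Y, Measurable h ∧ (∀ s : T, h s ∈ ({f s, g s} : Set Y)) ∧
        lam.map h = r • lam.map f + (1 - r) • lam.map g := by
  intro r hr
  classical
  set S : Y × Y → Set T := fun p => f ⁻¹' {p.1} ∩ g ⁻¹' {p.2} with hS
  have hSmeas : ∀ p, MeasurableSet (S p) := fun p =>
    (hf (measurableSet_singleton _)).inter (hg (measurableSet_singleton _))
  have hSdisj : Pairwise (Function.onFun Disjoint S) := by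
    intro p q hpq
    rw [Function.onFun, Set.disjoint_left]
    rintro a ⟨haf, hag⟩ ⟨hbf, hbg⟩
    exact hpq (Prod.ext ((Set.mem_singleton_iff.mp haf).symm.trans hbf)
      ((Set.mem_singleton_iff.mp hag).symm.trans hbg))
  have hSmem : ∀ a : T, a ∈ S (f a, g a) := fun a => ⟨rfl, rfl⟩
  -- choose pieces
  have hA : ∀ p, ∃ u, u ⊆ S p ∧ MeasurableSet u ∧ lam u = (r : ℝ≥0∞) * lam (S p) := by
    intro p
    refine atomless_exists_measure_eq lam hatomless (hSmeas p) ?_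
    calc (r : ℝ≥0∞) * lam (S p) ≤ 1 * lam (S p) := by
          gcongr; exact_mod_cast hr
    _ = lam (S p) := one_mul _
  choose A hAsub hAmeas hAlam using hA
  set B : Set T := ⋃ p, A p with hB
  have hBmeas : MeasurableSet B := MeasurableSet.iUnion hAmeas
  have hBS : ∀ p, B ∩ S p = A p := by
    intro p
    ext a
    constructor
    · rintro ⟨hb, hsp⟩
      obtain ⟨q, hq⟩ := Set.mem_iUnion.mp hb
      rcases eq_or_ne q p with rfl | hne
      · exact hq
      · exact absurd (Set.disjoint_left.mp (hSdisj hne) (hAsub q hq) hsp) (fun h => h)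
    · intro ha
      exact ⟨Set.mem_iUnion.mpr ⟨p, ha⟩, hAsub p ha⟩
  set h : T → Y := B.piecewise f g with hh
  have hhm : Measurable h := Measurable.piecewise hBmeas hf hg
  refine ⟨h, hhm, fun a => ?_, ?_⟩
  · by_cases hmem : a ∈ B
    · left; simp [hh, Set.piecewise, hmem]
    · right; simp [hh, Set.piecewise, hmem]
  · -- main measure identity
    have hdecomp : ∀ E : Set T, MeasurableSet E → lam E = ∑' p, lam (E ∩ S p) := by
      intro E hE
      have hcover : E = ⋃ p, E ∩ S p := by
        ext a
        simp only [Set.mem_iUnion, Set.mem_inter_iff]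
        exact ⟨fun ha => ⟨(f a, g a), ha, hSmem a⟩, fun ⟨p, hp, _⟩ => hp⟩
      calc lam E = lam (⋃ p, E ∩ S p) := by rw [← hcover]
      _ = ∑' p, lam (E ∩ S p) := measure_iUnion
        (hSdisj.mono fun p q hd => hd.mono Set.inter_subset_right Set.inter_subset_right)
        (fun p => hE.inter (hSmeas p))
    have hr1 : (r : ℝ≥0∞) + ((1 - r : ℝ≥0) : ℝ≥0∞) = 1 := by
      rw [← ENNReal.coe_add, add_comm, tsub_add_cancel_of_le hr, ENNReal.coe_one]
    have key : ∀ (E : Set Y), MeasurableSet E → ∀ p : Y × Y,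
        lam (h ⁻¹' E ∩ S p) =
          (r : ℝ≥0∞) * lam (f ⁻¹' E ∩ S p)
            + ((1 - r : ℝ≥0) : ℝ≥0∞) * lam (g ⁻¹' E ∩ S p) := by
      intro E hE p
      have hfs : ∀ a ∈ S p, f a = p.1 := fun a ha => ha.1
      have hgs : ∀ a ∈ S p, g a = p.2 := fun a ha => ha.2
      have hfE1 : p.1 ∈ E → f ⁻¹' E ∩ S p = S p := fun hp =>
        Set.inter_eq_self_of_subset_right fun a ha => by
          simp only [Set.mem_preimage, hfs a ha]; exact hp
      have hfE0 : p.1 ∉ E → f ⁻¹' E ∩ S p = ∅ := fun hp =>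
        Set.eq_empty_of_forall_notMem fun a ⟨haE, haS⟩ => hp (hfs a haS ▸ haE)
      have hgE1 : p.2 ∈ E → g ⁻¹' E ∩ S p = S p := fun hp =>
        Set.inter_eq_self_of_subset_right fun a ha => by
          simp only [Set.mem_preimage, hgs a ha]; exact hp
      have hgE0 : p.2 ∉ E → g ⁻¹' E ∩ S p = ∅ := fun hp =>
        Set.eq_empty_of_forall_notMem fun a ⟨haE, haS⟩ => hp (hgs a haS ▸ haE)
      have hha : ∀ a ∈ S p, h a = if a ∈ B then p.1 else p.2 := by
        intro a ha
        by_cases hb : a ∈ B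
        · simp [hh, Set.piecewise, hb, hfs a ha]
        · simp [hh, Set.piecewise, hb, hgs a ha]
      by_cases hp1 : p.1 ∈ E <;> by_cases hp2 : p.2 ∈ E
      · -- both in E
        have : h ⁻¹' E ∩ S p = S p := Set.inter_eq_self_of_subset_right fun a ha => by
          simp only [Set.mem_preimage, hha a ha]
          split <;> assumption
        rw [this, hfE1 hp1, hgE1 hp2, ← add_mul, hr1, one_mul]
      · -- p.1 ∈ E, p.2 ∉ E
        have : h ⁻¹' E ∩ S p = A p := by
          rw [← hBS p]
          ext a
          simp only [Set.mem_inter_iff, Set.mem_preimage]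
          constructor
          · rintro ⟨haE, haS⟩
            refine ⟨?_, haS⟩
            by_contra hb
            rw [hha a haS, if_neg hb] at haE
            exact hp2 haE
          · rintro ⟨hb, haS⟩
            refine ⟨?_, haS⟩
            rw [hha a haS, if_pos hb]
            exact hp1
        rw [this, hfE1 hp1, hgE0 hp2, hAlam p]
        simp
      · -- p.1 ∉ E, p.2 ∈ E
        have hset : h ⁻¹' E ∩ S p = S p \ A p := by
          rw [← hBS p]
          ext a
          simp only [Set.mem_inter_iff, Set.mem_preimage, Set.mem_diff]
          constructor
          · rintro ⟨haE, haS⟩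
            refine ⟨haS, fun hab => ?_⟩
            rw [hha a haS, if_pos hab.1] at haE
            exact hp1 haE
          · rintro ⟨haS, hab⟩
            have hb : a ∉ B := fun hb => hab ⟨hb, haS⟩
            refine ⟨?_, haS⟩
            rw [hha a haS, if_neg hb]
            exact hp2
        have hdiff : lam (S p \ A p) = lam (S p) - lam (A p) :=
          measure_diff (hAsub p) (hAmeas p).nullMeasurableSet (measure_ne_top lam _)
        have hval : lam (S p \ A p) = ((1 - r : ℝ≥0) : ℝ≥0∞) * lam (S p) := by
          rw [hdiff, hAlam p]
          refine (ENNReal.eq_sub_of_add_eq ?_ ?_).symm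
          · exact ENNReal.mul_ne_top ENNReal.coe_ne_top (measure_ne_top lam _)
          · rw [← add_mul, add_comm, hr1, one_mul]
        rw [hset, hval, hfE0 hp1, hgE1 hp2]
        simp
      · -- neither
        have : h ⁻¹' E ∩ S p = ∅ := Set.eq_empty_of_forall_notMem fun a ⟨haE, haS⟩ => by
          have hmem : h a ∈ E := haE
          rw [hha a haS] at hmem
          revert hmem; split <;> [exact hp1; exact hp2]
        rw [this, hfE0 hp1, hgE0 hp2]
        simp
    refine Measure.ext fun E hE => ?_
    rw [Measure.map_apply hhm hE, Measure.add_apply, Measure.smul_apply, Measure.smul_apply,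
      Measure.map_apply hf hE, Measure.map_apply hg hE,
      hdecomp _ (hhm hE), hdecomp _ (hf hE), hdecomp _ (hg hE)]
    simp only [ENNReal.smul_def, smul_eq_mul]
    rw [← ENNReal.tsum_mul_left, ← ENNReal.tsum_mul_left, ← ENNReal.tsum_add]
    exact tsum_congr (key E hE)
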